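/- Let Γ be a co-edge-regular graph cospectral with the s-clique extension of T(n), s ≥ 2, n ≥ 4. Then every pair of distinct non-adjacent vertices of Γ has exactly μ = 4s common neighbors. -/

import Mathlib

open Matrix Polynomial

section Aux

lemma myCharpolyConj {m R : Type*} [Fintype m] [DecidableEq m] [CommRing R]
    (P M Q : Matrix m m R) (hPQ : P * Q = 1) :
    (P * M * Q).charpoly = M.charpoly := by
  have key : charmatrix (P * M * Q) = P.map C * charmatrix M * Q.map C := by
    unfold charmatrix
    rw [Matrix.mul_sub, Matrix.sub_mul]
    congr 1
    · have h1 : P.map C * Matrix.scalar m (X : R[X]) = Matrix.scalar m (X : R[X]) * P.map C := by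
        rw [Matrix.scalar_commute]
        intro r; exact Commute.all _ _
      rw [h1, Matrix.mul_assoc]
      have : P.map C * Q.map C = 1 := by
        rw [← Matrix.map_mul, hPQ, Matrix.map_one C (map_zero C) (map_one C)]
      rw [this, Matrix.mul_one]
    · simp only [RingHom.mapMatrix_apply, Matrix.map_mul]
  have hone : P.map C * Q.map C = 1 := by
    rw [← Matrix.map_mul, hPQ, Matrix.map_one C (map_zero C) (map_one C)]
  have hdet : (P.map C).det * (Q.map C).det = 1 := by
    rw [← Matrix.det_mul, hone, Matrix.det_one]
  unfold Matrix.charpoly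
  rw [key, Matrix.det_mul, Matrix.det_mul]
  calc (P.map C).det * (charmatrix M).det * (Q.map C).det
      = (charmatrix M).det * ((P.map C).det * (Q.map C).det) := by ring
    _ = (charmatrix M).det := by rw [hdet, mul_one]

lemma myCharpolyDiagonal {m R : Type*} [Fintype m] [DecidableEq m] [CommRing R] (d : m → R) :
    (Matrix.diagonal d).charpoly = ∏ i, (X - C (d i)) := by
  unfold Matrix.charpoly
  have : charmatrix (Matrix.diagonal d) = Matrix.diagonal (fun i => X - C (d i)) := by
    refine Matrix.ext fun i j => ?_
    by_cases h : i = j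
    · subst h; simp [charmatrix_apply_eq]
    · rw [charmatrix_apply_ne _ _ _ h, Matrix.diagonal_apply_ne _ h,
        Matrix.diagonal_apply_ne _ h, map_zero, neg_zero]
  rw [this, Matrix.det_diagonal]

lemma myConjPow {m R : Type*} [Fintype m] [DecidableEq m] [CommRing R]
    (P M Q : Matrix m m R) (hQP : Q * P = 1) :
    ∀ k : ℕ, 1 ≤ k → (P * M * Q) ^ k = P * M ^ k * Q := by
  intro k hk
  induction k, hk using Nat.le_induction with
  | base => simp [pow_one]
  | succ k hk ih =>
    rw [pow_succ, ih, pow_succ]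
    calc P * M ^ k * Q * (P * M * Q) = P * M ^ k * (Q * P) * M * Q := by
          simp only [Matrix.mul_assoc]
      _ = P * (M ^ k * M) * Q := by rw [hQP, Matrix.mul_one]; simp only [Matrix.mul_assoc]

lemma myHermCharpoly {m : Type*} [Fintype m] [DecidableEq m] (A : Matrix m m ℝ)
    (hA : A.IsHermitian) :
    A.charpoly = ∏ i, (X - C (hA.eigenvalues i)) := by
  have hdiag : (Matrix.diagonal (RCLike.ofReal ∘ hA.eigenvalues) : Matrix m m ℝ)
      = Matrix.diagonal hA.eigenvalues := by congr 1
  conv_lhs => rw [hA.spectral_theorem, hdiag, Unitary.conjStarAlgAut_apply]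
  rw [myCharpolyConj _ _ _ (Matrix.mem_unitaryGroup_iff.mp hA.eigenvectorUnitary.2),
    myCharpolyDiagonal]

lemma myHermTracePow {m : Type*} [Fintype m] [DecidableEq m] (A : Matrix m m ℝ)
    (hA : A.IsHermitian) (k : ℕ) (hk : 1 ≤ k) :
    (A ^ k).trace = ∑ i, hA.eigenvalues i ^ k := by
  have hdiag : (Matrix.diagonal (RCLike.ofReal ∘ hA.eigenvalues) : Matrix m m ℝ)
      = Matrix.diagonal hA.eigenvalues := by congr 1
  conv_lhs => rw [hA.spectral_theorem, hdiag, Unitary.conjStarAlgAut_apply]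
  rw [myConjPow _ _ _ (Matrix.mem_unitaryGroup_iff'.mp hA.eigenvectorUnitary.2) k hk,
    Matrix.trace_mul_comm, ← Matrix.mul_assoc,
    Matrix.mem_unitaryGroup_iff'.mp hA.eigenvectorUnitary.2, Matrix.one_mul,
    Matrix.diagonal_pow, Matrix.trace_diagonal]
  simp [Pi.pow_apply]

lemma myRootsForm (a b c d : ℝ) (e2 e3 e4 : ℕ) (p : ℝ[X])
    (hp : p = (X - C a) * (X - C b) ^ e2 * (X - C c) ^ e3 * (X - C d) ^ e4) :
    p.roots = {a} + e2 • {b} + e3 • {c} + e4 • {d} := by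
  have m1 : (X - C a).Monic := monic_X_sub_C a
  have m2 : ((X - C b) ^ e2).Monic := (monic_X_sub_C b).pow e2
  have m3 : ((X - C c) ^ e3).Monic := (monic_X_sub_C c).pow e3
  have m4 : ((X - C d) ^ e4).Monic := (monic_X_sub_C d).pow e4
  rw [hp, Polynomial.roots_mul (((m1.mul m2).mul m3).mul m4).ne_zero,
    Polynomial.roots_mul ((m1.mul m2).mul m3).ne_zero,
    Polynomial.roots_mul (m1.mul m2).ne_zero,
    Polynomial.roots_pow, Polynomial.roots_pow, Polynomial.roots_pow,
    roots_X_sub_C, roots_X_sub_C, roots_X_sub_C, roots_X_sub_C]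

lemma myCharpolyRootsEig {m : Type*} [Fintype m] [DecidableEq m] (A : Matrix m m ℝ)
    (hA : A.IsHermitian) :
    A.charpoly.roots = Finset.univ.val.map hA.eigenvalues := by
  rw [myHermCharpoly A hA,
    ← Polynomial.roots_multiset_prod_X_sub_C (Finset.univ.val.map hA.eigenvalues)]
  congr 1
  rw [Multiset.map_map]
  rfl

lemma mySumEig {V : Type*} [Fintype V] [DecidableEq V] (ev : V → ℝ) (a b c d : ℝ)
    (e2 e3 e4 : ℕ)
    (hroots : (Finset.univ.val.map ev) = {a} + e2 • {b} + e3 • {c} + e4 • {d}) (f : ℝ → ℝ) :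
    ∑ i : V, f (ev i) = f a + e2 * f b + e3 * f c + e4 * f d := by
  have h1 : ∑ i : V, f (ev i) = ((Finset.univ.val.map ev).map f).sum := by
    rw [Multiset.map_map]; rfl
  rw [h1, hroots]
  simp [Multiset.nsmul_singleton, Multiset.sum_replicate, nsmul_eq_mul]
  ring

lemma myCardEig {V : Type*} [Fintype V] [DecidableEq V] (ev : V → ℝ) (a b c d : ℝ)
    (e2 e3 e4 : ℕ)
    (hroots : (Finset.univ.val.map ev) = {a} + e2 • {b} + e3 • {c} + e4 • {d}) :
    Fintype.card V = 1 + e2 + e3 + e4 := by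
  have := congrArg Multiset.card hroots
  simp [Multiset.nsmul_singleton] at this
  omega

lemma myCastE3 (n : ℕ) (hn : 4 ≤ n) :
    (((n ^ 2 - 3 * n) / 2 : ℕ) : ℝ) = ((n : ℝ) ^ 2 - 3 * n) / 2 := by
  have h3 : 3 * n ≤ n ^ 2 := by nlinarith
  have heq : n ^ 2 - 3 * n = n * (n - 3) := by
    have h4 : 3 ≤ n := by omega
    zify [h3, h4]; ring
  have h2 : 2 ∣ n ^ 2 - 3 * n := by
    rw [heq]
    rcases Nat.even_or_odd n with h | h
    · exact (h.mul_right _).two_dvd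
    · exact ((Nat.Odd.sub_odd h (by decide)).mul_left _).two_dvd
  rw [Nat.cast_div h2 (by norm_num)]
  push_cast [h3]
  ring

lemma myCastE4 (s n : ℕ) (hs : 2 ≤ s) (hn : 4 ≤ n) :
    (((s - 1) * n * (n - 1) / 2 : ℕ) : ℝ) = ((s : ℝ) - 1) * n * ((n : ℝ) - 1) / 2 := by
  have h2 : 2 ∣ (s - 1) * n * (n - 1) := by
    have : 2 ∣ n * (n - 1) := (Nat.even_mul_pred_self n).two_dvd
    obtain ⟨t, ht⟩ := this
    exact ⟨(s - 1) * t, by rw [Nat.mul_assoc, ht]; ring⟩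
  rw [Nat.cast_div h2 (by norm_num)]
  push_cast [show 1 ≤ s by omega, show 1 ≤ n by omega]
  ring

end Aux

/-- A co-edge-regular graph cospectral with the `s`-clique extension of `T(n)`
(`s ≥ 2`, `n ≥ 4`) has `μ = 4s`: every pair of distinct non-adjacent vertices has
exactly `4s` common neighbours. -/
theorem mu_eq_four_s {V : Type*} [Fintype V] [DecidableEq V]
    (G : SimpleGraph V) [DecidableRel G.Adj]
    (s n : ℕ) (hs : 2 ≤ s) (hn : 4 ≤ n)
    (hreg : ∃ k, G.IsRegularOfDegree k)
    (hcoedge : ∃ μ, ∀ x y : V, x ≠ y → ¬ G.Adj x y →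
      (G.neighborFinset x ∩ G.neighborFinset y).card = μ)
    (hspec : (G.adjMatrix ℝ).charpoly =
      (X - C ((s : ℝ) * (2 * n - 3) - 1)) *
        (X - C ((s : ℝ) * ((n : ℝ) - 3) - 1)) ^ (n - 1) *
        (X - C (-(s : ℝ) - 1)) ^ ((n ^ 2 - 3 * n) / 2) *
        (X - C (-1)) ^ ((s - 1) * n * (n - 1) / 2)) :
    ∀ x y : V, x ≠ y → ¬ G.Adj x y →
      (G.neighborFinset x ∩ G.neighborFinset y).card = 4 * s := by
  intro x y hxy hnadj
  obtain ⟨k, hreg⟩ := hreg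
  obtain ⟨μ, hμ⟩ := hcoedge
  rw [hμ x y hxy hnadj]
  -- it suffices to prove the real version
  suffices h : (μ : ℝ) = ((4 * s : ℕ) : ℝ) by exact_mod_cast h
  set A := G.adjMatrix ℝ with hAdef
  have hA : A.IsHermitian := by
    rw [Matrix.IsHermitian, Matrix.conjTranspose_eq_transpose_of_trivial]
    exact G.isSymm_adjMatrix
  -- eigenvalues
  have hroots : (Finset.univ.val.map hA.eigenvalues) =
      {(s : ℝ) * (2 * n - 3) - 1} + (n - 1) • {(s : ℝ) * ((n : ℝ) - 3) - 1}
        + ((n ^ 2 - 3 * n) / 2) • {-(s : ℝ) - 1}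
        + ((s - 1) * n * (n - 1) / 2) • {(-1 : ℝ)} := by
    rw [← myCharpolyRootsEig A hA]
    exact myRootsForm _ _ _ _ _ _ _ _ hspec
  -- abbreviations for the real quantities
  set sr : ℝ := (s : ℝ) with hsrdef
  set nr : ℝ := (n : ℝ) with hnrdef
  have hsr : (2 : ℝ) ≤ sr := by rw [hsrdef]; exact_mod_cast hs
  have hnr : (4 : ℝ) ≤ nr := by rw [hnrdef]; exact_mod_cast hn
  have hE2 : ((n - 1 : ℕ) : ℝ) = nr - 1 := by
    push_cast [show 1 ≤ n by omega]; ring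
  have hE3 : (((n ^ 2 - 3 * n) / 2 : ℕ) : ℝ) = (nr ^ 2 - 3 * nr) / 2 := myCastE3 n hn
  have hE4 : (((s - 1) * n * (n - 1) / 2 : ℕ) : ℝ) = (sr - 1) * nr * (nr - 1) / 2 :=
    myCastE4 s n hs hn
  set N : ℝ := (Fintype.card V : ℝ) with hNdef
  -- number of vertices
  have hcard : N = 1 + (nr - 1) + (nr ^ 2 - 3 * nr) / 2 + (sr - 1) * nr * (nr - 1) / 2 := by
    have h := myCardEig _ _ _ _ _ _ _ _ hroots
    rw [hNdef, h]
    push_cast [hE2, hE3, hE4]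
    ring
  -- power sums
  have hpsum : ∀ f : ℝ → ℝ, ∑ i, f (hA.eigenvalues i) =
      f (sr * (2 * nr - 3) - 1) + (nr - 1) * f (sr * (nr - 3) - 1)
        + (nr ^ 2 - 3 * nr) / 2 * f (-sr - 1)
        + (sr - 1) * nr * (nr - 1) / 2 * f (-1) := by
    intro f
    rw [mySumEig _ _ _ _ _ _ _ _ hroots f, hE2, hE3, hE4]
  have htr2 : (A ^ 2).trace =
      (sr * (2 * nr - 3) - 1) ^ 2 + (nr - 1) * (sr * (nr - 3) - 1) ^ 2
        + (nr ^ 2 - 3 * nr) / 2 * (-sr - 1) ^ 2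
        + (sr - 1) * nr * (nr - 1) / 2 * (-1 : ℝ) ^ 2 := by
    rw [myHermTracePow A hA 2 (by norm_num)]
    exact hpsum (fun t => t ^ 2)
  have htr3 : (A ^ 3).trace =
      (sr * (2 * nr - 3) - 1) ^ 3 + (nr - 1) * (sr * (nr - 3) - 1) ^ 3
        + (nr ^ 2 - 3 * nr) / 2 * (-sr - 1) ^ 3
        + (sr - 1) * nr * (nr - 1) / 2 * (-1 : ℝ) ^ 3 := by
    rw [myHermTracePow A hA 3 (by norm_num)]
    exact hpsum (fun t => t ^ 3)
  -- combinatorics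
  have hrow : ∀ v : V, ∑ w, A v w = (k : ℝ) := by
    intro v
    simp only [hAdef, SimpleGraph.adjMatrix_apply]
    rw [Finset.sum_boole]
    have : Finset.univ.filter (G.Adj v) = G.neighborFinset v := by
      ext z; simp [SimpleGraph.mem_neighborFinset]
    rw [this]
    exact_mod_cast congrArg Nat.cast (hreg v)
  have hcommon : ∀ v w : V, (A * A) v w
      = ((G.neighborFinset v ∩ G.neighborFinset w).card : ℝ) := by
    intro v w
    rw [hAdef, SimpleGraph.adjMatrix_mul_apply]
    simp only [SimpleGraph.adjMatrix_apply]
    rw [Finset.sum_boole]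
    congr 2
    ext z
    simp [SimpleGraph.mem_neighborFinset, SimpleGraph.adj_comm]
  have hsymm : ∀ v w : V, (A * A) v w = (A * A) w v := by
    intro v w
    rw [hcommon, hcommon, Finset.inter_comm]
  -- total sum
  have htot : ∑ v, ∑ w, (A * A) v w = N * (k : ℝ) ^ 2 := by
    have : ∀ v : V, ∑ w, (A * A) v w = (k : ℝ) ^ 2 := by
      intro v
      simp only [Matrix.mul_apply]
      rw [Finset.sum_comm]
      calc ∑ z, ∑ w, A v z * A z w = ∑ z, A v z * ∑ w, A z w := by
            simp [Finset.mul_sum]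
        _ = ∑ z, A v z * (k : ℝ) := by simp only [hrow]
        _ = (k : ℝ) ^ 2 := by rw [← Finset.sum_mul, hrow]; ring
    rw [Finset.sum_congr rfl fun v _ => this v, Finset.sum_const, hNdef]
    simp [mul_comm]
  -- diagonal sum
  have hdiagsum : ∑ v, (A * A) v v = N * (k : ℝ) := by
    have : ∀ v : V, (A * A) v v = (k : ℝ) := by
      intro v
      rw [hAdef, SimpleGraph.adjMatrix_mul_self_apply_self]
      exact_mod_cast congrArg Nat.cast (hreg v)
    rw [Finset.sum_congr rfl fun v _ => this v, Finset.sum_const, hNdef]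
    simp [mul_comm]
  have htr2' : (A ^ 2).trace = N * (k : ℝ) := by
    rw [pow_two, Matrix.trace]
    exact hdiagsum
  -- trace of cube
  have hAsym : ∀ v w : V, A v w = A w v := by
    intro v w
    simp only [hAdef, SimpleGraph.adjMatrix_apply, G.adj_comm v w]
  have htr3' : (A ^ 3).trace = ∑ v, ∑ w, A v w * (A * A) v w := by
    have h1 : ∀ v : V, (A ^ 3) v v = ∑ w, (A * A) v w * A w v := by
      intro v
      rw [pow_succ, pow_two]
      exact Matrix.mul_apply
    calc (A ^ 3).trace = ∑ v, ∑ w, (A * A) v w * A w v :=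
          Finset.sum_congr rfl fun v _ => h1 v
      _ = ∑ v, ∑ w, A v w * (A * A) v w := by
          refine Finset.sum_congr rfl fun v _ => Finset.sum_congr rfl fun w _ => ?_
          rw [← hAsym v w, mul_comm]
  -- the nonadjacent-pair count
  set P : ℝ := ∑ v, ∑ w, (if v ≠ w ∧ ¬ G.Adj v w then (1 : ℝ) else 0) with hPdef
  have hpoint : ∀ v w : V, (A * A) v w =
      (if v = w then (A * A) v w else 0) + A v w * (A * A) v w
        + (if v ≠ w ∧ ¬ G.Adj v w then (A * A) v w else 0) := by
    intro v w
    by_cases hvw : v = w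
    · subst hvw
      simp [hAdef, SimpleGraph.adjMatrix_apply]
    · by_cases hadj : G.Adj v w
      · simp [hvw, hadj, hAdef, SimpleGraph.adjMatrix_apply]
      · simp [hvw, hadj, hAdef, SimpleGraph.adjMatrix_apply]
  have hsplit : ∑ v, ∑ w, (A * A) v w
      = N * (k : ℝ) + (A ^ 3).trace + (μ : ℝ) * P := by
    have h1 : ∑ v, ∑ w, (A * A) v w
        = (∑ v, ∑ w, (if v = w then (A * A) v w else 0))
          + (∑ v, ∑ w, A v w * (A * A) v w)
          + (∑ v, ∑ w, (if v ≠ w ∧ ¬ G.Adj v w then (A * A) v w else 0)) := by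
      rw [← Finset.sum_add_distrib, ← Finset.sum_add_distrib]
      refine Finset.sum_congr rfl fun v _ => ?_
      rw [← Finset.sum_add_distrib, ← Finset.sum_add_distrib]
      exact Finset.sum_congr rfl fun w _ => hpoint v w
    rw [h1]
    congr 1
    · congr 1
      · rw [← hdiagsum]
        refine Finset.sum_congr rfl fun v _ => ?_
        simp
      · rw [htr3']
    · -- nonadjacent part equals μ * P
      rw [hPdef, Finset.mul_sum]
      refine Finset.sum_congr rfl fun v _ => ?_
      rw [Finset.mul_sum]
      refine Finset.sum_congr rfl fun w _ => ?_
      by_cases h : v ≠ w ∧ ¬ G.Adj v w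
      · rw [if_pos h, if_pos h, hcommon, hμ v w h.1 h.2, mul_one]
      · rw [if_neg h, if_neg h, mul_zero]
  -- value of P
  have hPval : P = N ^ 2 - N - N * (k : ℝ) := by
    have hpoint2 : ∀ v w : V, (if v ≠ w ∧ ¬ G.Adj v w then (1 : ℝ) else 0)
        = 1 - (if v = w then (1 : ℝ) else 0) - A v w := by
      intro v w
      by_cases hvw : v = w
      · subst hvw
        simp [hAdef, SimpleGraph.adjMatrix_apply]
      · by_cases hadj : G.Adj v w
        · simp [hvw, hadj, hAdef, SimpleGraph.adjMatrix_apply]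
        · simp [hvw, hadj, hAdef, SimpleGraph.adjMatrix_apply]
    rw [hPdef]
    have : ∀ v : V, ∑ w, (if v ≠ w ∧ ¬ G.Adj v w then (1 : ℝ) else 0)
        = N - 1 - (k : ℝ) := by
      intro v
      rw [Finset.sum_congr rfl fun w _ => hpoint2 v w]
      rw [Finset.sum_sub_distrib, Finset.sum_sub_distrib, hrow v]
      simp [hNdef]
    rw [Finset.sum_congr rfl fun v _ => this v, Finset.sum_const, hNdef]
    simp only [nsmul_eq_mul, Finset.card_univ]
    ring
  -- P is at least 1
  have hP1 : (1 : ℝ) ≤ P := by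
    rw [hPdef]
    have hx : (1 : ℝ) ≤ ∑ w, (if x ≠ w ∧ ¬ G.Adj x w then (1 : ℝ) else 0) := by
      have := Finset.single_le_sum (f := fun w => (if x ≠ w ∧ ¬ G.Adj x w then (1 : ℝ) else 0))
        (fun w _ => by positivity) (Finset.mem_univ y)
      simpa [hxy, hnadj] using this
    calc (1 : ℝ) ≤ ∑ w, (if x ≠ w ∧ ¬ G.Adj x w then (1 : ℝ) else 0) := hx
      _ ≤ ∑ v, ∑ w, (if v ≠ w ∧ ¬ G.Adj v w then (1 : ℝ) else 0) :=
          Finset.single_le_sum (f := fun v => ∑ w, (if v ≠ w ∧ ¬ G.Adj v w then (1 : ℝ) else 0))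
            (fun v _ => Finset.sum_nonneg fun w _ => by positivity) (Finset.mem_univ x)
  -- final algebra
  have hNpos : (0 : ℝ) < N := by rw [hcard]; nlinarith
  have hk2 : N * (k : ℝ) = N * (sr * (2 * nr - 3) - 1) := by
    rw [← htr2', htr2, hcard]; ring
  have hkval : (k : ℝ) = sr * (2 * nr - 3) - 1 := mul_left_cancel₀ hNpos.ne' hk2
  have hmain : (μ : ℝ) * P = N * (k : ℝ) ^ 2 - N * (k : ℝ) - (A ^ 3).trace := by
    have := hsplit
    rw [htot] at this
    linarith
  have hkey : (μ : ℝ) * P = (4 * sr) * P := by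
    rw [hmain, htr3, hPval, hkval, hcard]
    ring
  have hPne : P ≠ 0 := by linarith
  have := mul_right_cancel₀ hPne hkey
  rw [this]
  push_cast
  ring
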